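/- Let g_c(p) := log(1 + c|log p|) for c > 0 (the quantile function when γ ≡ c) and g_U(p) be the solution of p = Λ_U(e^r − 1) where Λ_U(ρ) = ∫₀^1 e^{−ρ/y} dy (uniform γ). Then g_U(p)/g_c(p) → 1 as p → 0+; i.e., uniform γ on [0,1] yields the same first-order asymptotics as constant γ ≡ 1. -/

import Mathlib

open Real Filter MeasureTheory Set

lemma aux_ratio (α β : ℝ) (hα : 0 < α) :
    Tendsto (fun t : ℝ => Real.log (α*t+β) / Real.log t) atTop (nhds 1) := by
  have hlim : Tendsto (fun t : ℝ => α + β/t) atTop (nhds α) := by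
    have := tendsto_const_nhds (x := α) (f := atTop (α := ℝ)) |>.add
      ((tendsto_const_nhds (x := β)).div_atTop (tendsto_id (α := ℝ)))
    simpa using this
  have h1 : Tendsto (fun t : ℝ => Real.log (α + β/t)) atTop (nhds (Real.log α)) :=
    ((Real.continuousAt_log hα.ne').tendsto).comp hlim
  have h2 : Tendsto (fun t : ℝ => Real.log (α + β/t) / Real.log t) atTop (nhds 0) :=
    h1.div_atTop Real.tendsto_log_atTop
  have heq : ∀ᶠ t : ℝ in atTop,
      Real.log (α*t+β) / Real.log t = 1 + Real.log (α + β/t) / Real.log t := by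
    filter_upwards [eventually_gt_atTop (max 1 ((|β|+1)/α))] with t ht
    have ht1 : 1 < t := lt_of_le_of_lt (le_max_left _ _) ht
    have ht0 : 0 < t := lt_trans zero_lt_one ht1
    have hβ : (|β|+1)/α < t := lt_of_le_of_lt (le_max_right _ _) ht
    have habs : |β/t| < α := by
      rw [abs_div, abs_of_pos ht0, div_lt_iff₀ ht0]
      have := (div_lt_iff₀ hα).mp hβ
      nlinarith [abs_nonneg β]
    have hpos : 0 < α + β/t := by
      have := (abs_lt.mp habs).1
      linarith
    have hlogt : Real.log t ≠ 0 := ne_of_gt (Real.log_pos ht1)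
    have hsplit : Real.log (α*t+β) = Real.log t + Real.log (α + β/t) := by
      have h : α*t+β = t * (α + β/t) := by field_simp
      rw [h, Real.log_mul (ne_of_gt ht0) (ne_of_gt hpos)]
    rw [hsplit, add_div, div_self hlogt]
  rw [tendsto_congr' heq]
  simpa using tendsto_const_nhds.add h2

lemma aux_ratio2 (α β α' β' : ℝ) (hα : 0 < α) (hα' : 0 < α') :
    Tendsto (fun t : ℝ => Real.log (α*t+β) / Real.log (α'*t+β')) atTop (nhds 1) := by
  have h := (aux_ratio α β hα).div (aux_ratio α' β' hα') one_ne_zero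
  have heq : ∀ᶠ t : ℝ in atTop,
      (Real.log (α*t+β) / Real.log t) / (Real.log (α'*t+β') / Real.log t)
        = Real.log (α*t+β) / Real.log (α'*t+β') := by
    filter_upwards [eventually_gt_atTop 1] with t ht1
    have hlogt : Real.log t ≠ 0 := ne_of_gt (Real.log_pos ht1)
    rw [div_div_div_cancel_right₀]
    exact hlogt
  simpa using h.congr' heq

lemma lam_integrable (ρ : ℝ) (hρ : 0 ≤ ρ) :
    IntegrableOn (fun y : ℝ => Real.exp (-ρ/y)) (Ioc (0:ℝ) 1) := by
  apply Measure.integrableOn_of_bounded (M := 1)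
  · simp
  · exact ((measurable_const.div measurable_id).exp).aestronglyMeasurable
  · refine (ae_restrict_iff' measurableSet_Ioc).2 (Filter.Eventually.of_forall fun y hy => ?_)
    rw [Real.norm_eq_abs, abs_of_pos (Real.exp_pos _), Real.exp_le_one_iff]
    exact div_nonpos_of_nonpos_of_nonneg (by linarith) hy.1.le

lemma lam_upper (ρ : ℝ) (hρ : 0 ≤ ρ) :
    (∫ y in Ioc (0:ℝ) 1, Real.exp (-ρ/y)) ≤ Real.exp (-ρ) := by
  have h := setIntegral_mono_on (lam_integrable ρ hρ)
    (integrableOn_const (by simp))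
    measurableSet_Ioc (f := fun y => Real.exp (-ρ/y)) (g := fun _ => Real.exp (-ρ))
    (fun y hy => by
      apply Real.exp_le_exp.2
      rw [neg_div, neg_le_neg_iff]
      calc ρ = ρ * 1 := (mul_one ρ).symm
        _ ≤ ρ * (1/y) := by
            apply mul_le_mul_of_nonneg_left _ hρ
            rw [le_div_iff₀ hy.1]; linarith [hy.2]
        _ = ρ / y := by ring
      )
  simpa [Real.volume_Ioc] using h

lemma lam_lower (ρ : ℝ) (hρ : 0 ≤ ρ) :
    Real.exp (-(2*ρ))/2 ≤ ∫ y in Ioc (0:ℝ) 1, Real.exp (-ρ/y) := by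
  have hsub : Ioc (1/2:ℝ) 1 ⊆ Ioc 0 1 := Ioc_subset_Ioc_left (by norm_num)
  have step1 : (∫ y in Ioc (1/2:ℝ) 1, Real.exp (-ρ/y)) ≤
      ∫ y in Ioc (0:ℝ) 1, Real.exp (-ρ/y) := by
    apply setIntegral_mono_set (lam_integrable ρ hρ)
      (Filter.Eventually.of_forall fun y => (Real.exp_pos _).le)
      (HasSubset.Subset.eventuallyLE hsub)
  have step2 : (∫ _y in Ioc (1/2:ℝ) 1, Real.exp (-(2*ρ))) ≤
      ∫ y in Ioc (1/2:ℝ) 1, Real.exp (-ρ/y) := by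
    apply setIntegral_mono_on (integrableOn_const (by simp))
      ((lam_integrable ρ hρ).mono_set hsub) measurableSet_Ioc
    intro y hy
    apply Real.exp_le_exp.2
    rw [neg_div, neg_le_neg_iff, div_le_iff₀ (by linarith [hy.1] : (0:ℝ) < y)]
    nlinarith [hy.1, hρ]
  have hconst : (∫ _y in Ioc (1/2:ℝ) 1, Real.exp (-(2*ρ))) = Real.exp (-(2*ρ))/2 := by
    simp [Real.volume_Ioc]
    norm_num
    ring
  linarith [step1, step2, hconst.symm.le]

theorem stmt_15 (c : ℝ) (hc : 0 < c) (gU : ℝ → ℝ)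
    (hgU : ∀ᶠ p in nhdsWithin (0:ℝ) (Set.Ioi 0), 0 < gU p ∧
      (∫ y in Set.Ioc (0:ℝ) 1, Real.exp (-(Real.exp (gU p) - 1) / y)) = p) :
    Tendsto (fun p : ℝ => gU p / Real.log (1 + c * |Real.log p|))
      (nhdsWithin 0 (Set.Ioi 0)) (nhds 1) := by
  have hT : Tendsto (fun p : ℝ => -Real.log p) (nhdsWithin (0:ℝ) (Set.Ioi 0)) atTop :=
    tendsto_neg_atBot_atTop.comp Real.tendsto_log_nhdsGT_zero
  have hlog2 : Real.log 2 < 1 := by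
    have := Real.log_two_lt_d9; linarith
  have hLB : Tendsto (fun p : ℝ =>
      Real.log ((1/2)*(-Real.log p) + (1 - Real.log 2/2)) / Real.log (c*(-Real.log p) + 1))
      (nhdsWithin (0:ℝ) (Set.Ioi 0)) (nhds 1) :=
    (aux_ratio2 (1/2) (1 - Real.log 2/2) c 1 (by norm_num) hc).comp hT
  have hUB : Tendsto (fun p : ℝ =>
      Real.log (1*(-Real.log p) + 1) / Real.log (c*(-Real.log p) + 1))
      (nhdsWithin (0:ℝ) (Set.Ioi 0)) (nhds 1) :=
    (aux_ratio2 1 1 c 1 one_pos hc).comp hT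
  apply tendsto_of_tendsto_of_tendsto_of_le_of_le' hLB hUB
  · -- lower bound
    filter_upwards [hgU, hT.eventually (eventually_ge_atTop 2), self_mem_nhdsWithin]
      with p hg htM hp
    obtain ⟨hgpos, hΛ⟩ := hg
    have hp0 : (0:ℝ) < p := hp
    set t : ℝ := -Real.log p with htdef
    set ρ : ℝ := Real.exp (gU p) - 1 with hρdef
    have hρpos : 0 < ρ := by
      have : (1:ℝ) < Real.exp (gU p) := by
        rw [show (1:ℝ) = Real.exp 0 by simp]; exact Real.exp_lt_exp.2 hgpos
      simp [hρdef]; linarith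
    have habs : |Real.log p| = t := by
      rw [abs_of_neg (by linarith : Real.log p < 0)]
    have hDdef : 1 + c * |Real.log p| = c * t + 1 := by rw [habs]; ring
    have hg_eq : gU p = Real.log (1+ρ) := by
      rw [show (1:ℝ)+ρ = Real.exp (gU p) by simp [hρdef], Real.log_exp]
    -- lower bound on ρ
    have hlow : Real.exp (-(2*ρ))/2 ≤ p := hΛ ▸ lam_lower ρ hρpos.le
    have h2p : Real.exp (-(2*ρ)) ≤ 2*p := by linarith
    have : -(2*ρ) ≤ Real.log (2*p) := (Real.le_log_iff_exp_le (by linarith)).2 h2p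
    rw [Real.log_mul two_ne_zero hp0.ne'] at this
    have hρlow : (t - Real.log 2)/2 ≤ ρ := by
      simp only [htdef]; linarith
    have hargpos : 0 < (1/2)*t + (1 - Real.log 2/2) := by nlinarith
    have hD : 0 < Real.log (c*t + 1) := Real.log_pos (by nlinarith)
    rw [hDdef, hg_eq]
    apply div_le_div_of_nonneg_right _ hD.le
    have : (1/2)*t + (1 - Real.log 2/2) ≤ 1 + ρ := by linarith
    calc Real.log ((1/2)*t + (1 - Real.log 2/2)) ≤ Real.log (1+ρ) := by
          gcongr
      _ = Real.log (1+ρ) := rfl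
  · -- upper bound
    filter_upwards [hgU, hT.eventually (eventually_ge_atTop 2), self_mem_nhdsWithin]
      with p hg htM hp
    obtain ⟨hgpos, hΛ⟩ := hg
    have hp0 : (0:ℝ) < p := hp
    set t : ℝ := -Real.log p with htdef
    set ρ : ℝ := Real.exp (gU p) - 1 with hρdef
    have hρpos : 0 < ρ := by
      have : (1:ℝ) < Real.exp (gU p) := by
        rw [show (1:ℝ) = Real.exp 0 by simp]; exact Real.exp_lt_exp.2 hgpos
      simp [hρdef]; linarith
    have habs : |Real.log p| = t := by
      rw [abs_of_neg (by linarith : Real.log p < 0)]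
    have hDdef : 1 + c * |Real.log p| = c * t + 1 := by rw [habs]; ring
    have hg_eq : gU p = Real.log (1+ρ) := by
      rw [show (1:ℝ)+ρ = Real.exp (gU p) by simp [hρdef], Real.log_exp]
    have hup : p ≤ Real.exp (-ρ) := hΛ ▸ lam_upper ρ hρpos.le
    have hlogle : Real.log p ≤ -ρ := (Real.log_le_iff_le_exp hp0).2 hup
    have hρhigh : ρ ≤ t := by simp only [htdef]; linarith
    have hD : 0 < Real.log (c*t + 1) := Real.log_pos (by nlinarith)
    rw [hDdef, hg_eq]
    apply div_le_div_of_nonneg_right _ hD.le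
    have h1 : (1:ℝ)+ρ ≤ 1*t+1 := by linarith
    have h2 : (0:ℝ) < 1+ρ := by linarith
    gcongr
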